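/- Failure of the moment when the instrument is not in the first-stage conditioning set: if g(w) = ρw with ρ ≠ 0, and E[ξ + ε | z] = 0, then the feasible moment E[q − f⁰ − ρ(E[q'|x'] − f⁰') | z] equals ρ·E[ζ' | z] a.s., where ζ' = ω' − E[ω'|x']; in particular the moment is zero a.s. if and only if E[ζ' | z] = 0 a.s. -/

import Mathlib

open MeasureTheory Filter

/-- Conditional expectation of `f` given the sub-σ-algebra `m`, as a function. -/
noncomputable def ce {Ω : Type*} {m0 : MeasurableSpace Ω} (m : MeasurableSpace Ω)
    (μ : @Measure Ω m0) (f : Ω → ℝ) : Ω → ℝ := μ[f|m]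

/-- Failure of the moment when the instrument is not in the first-stage
conditioning set: with g(w) = ρw, ρ ≠ 0, and E[ξ + ε|z] = 0, the feasible moment
E[q − f⁰ − ρ(E[q'|x'] − f⁰')|z] equals ρ·E[ζ'|z] a.s. where ζ' = ω' − E[ω'|x']; in
particular it is zero a.s. iff E[ζ'|z] = 0 a.s. -/
theorem stmt16 {Ω : Type*} [F : MeasurableSpace Ω] {μ : Measure Ω} [IsProbabilityMeasure μ]
    (mz mx : MeasurableSpace Ω) (hmz : mz ≤ F) (hmx : mx ≤ F)
    (q q' ω ω' ε ε' f0 f0' : Ω → ℝ) (ρ : ℝ) (hρ : ρ ≠ 0)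
    (hωi : Integrable ω μ) (hω'i : Integrable ω' μ)
    (hεi : Integrable ε μ) (hε'i : Integrable ε' μ)
    (hf0i : Integrable f0 μ) (hf0'i : Integrable f0' μ)
    (hf0 : StronglyMeasurable[mz] f0) (hf0' : StronglyMeasurable[mx] f0')
    (hq : q = f0 + ω + ε) (hq' : q' = f0' + ω' + ε')
    (hε' : ce mx μ ε' =ᵐ[μ] 0)
    (hmom : ce mz μ (fun a => ω a - ρ * ω' a + ε a) =ᵐ[μ] 0) :
    (ce mz μ (fun a => q a - f0 a - ρ * (ce mx μ q' a - f0' a))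
        =ᵐ[μ] fun a => ρ * ce mz μ (fun b => ω' b - ce mx μ ω' b) a)
    ∧ ((ce mz μ (fun a => q a - f0 a - ρ * (ce mx μ q' a - f0' a)) =ᵐ[μ] 0)
        ↔ ce mz μ (fun b => ω' b - ce mx μ ω' b) =ᵐ[μ] 0) := by
  -- Step 1: ce mx μ q' =ᵐ f0' + ce mx μ ω'
  have hq'i : Integrable q' μ := by rw [hq']; exact (hf0'i.add hω'i).add hε'i
  have h1 : ce mx μ q' =ᵐ[μ] fun a => f0' a + ce mx μ ω' a := by
    have := condExp_add (μ := μ) (m := mx) (hf0'i.add hω'i) hε'i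
    rw [hq']
    have h2 := condExp_add (μ := μ) (m := mx) hf0'i hω'i
    have h3 : μ[f0'|mx] = f0' := condExp_of_stronglyMeasurable hmx hf0' hf0'i
    calc μ[(f0' + ω' + ε')|mx] =ᵐ[μ] μ[(f0' + ω')|mx] + μ[ε'|mx] := this
      _ =ᵐ[μ] fun a => f0' a + ce mx μ ω' a := by
          filter_upwards [h2, hε'] with a ha hb
          simp only [ce] at hb
          simp only [Pi.add_apply, ha, Pi.zero_apply, ce, h3, hb]
          ring
  -- Step 2: rewrite the integrand a.e.
  have hzi : Integrable (fun b => ω' b - ce mx μ ω' b) μ := hω'i.sub integrable_condExp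
  have hmi : Integrable (fun a => ω a - ρ * ω' a + ε a) μ :=
    (hωi.sub (hω'i.const_mul ρ)).add hεi
  have hint : (fun a => q a - f0 a - ρ * (ce mx μ q' a - f0' a)) =ᵐ[μ]
      fun a => (ω a - ρ * ω' a + ε a) + ρ * (ω' a - ce mx μ ω' a) := by
    filter_upwards [h1] with a ha
    rw [hq, ha]
    simp only [Pi.add_apply]
    ring
  have key : ce mz μ (fun a => q a - f0 a - ρ * (ce mx μ q' a - f0' a))
      =ᵐ[μ] fun a => ρ * ce mz μ (fun b => ω' b - ce mx μ ω' b) a := by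
    calc ce mz μ (fun a => q a - f0 a - ρ * (ce mx μ q' a - f0' a))
        =ᵐ[μ] ce mz μ (fun a => (ω a - ρ * ω' a + ε a) + ρ * (ω' a - ce mx μ ω' a)) :=
          condExp_congr_ae hint
      _ =ᵐ[μ] ce mz μ (fun a => ω a - ρ * ω' a + ε a)
            + ce mz μ (fun a => ρ * (ω' a - ce mx μ ω' a)) :=
          condExp_add (m := mz) hmi (hzi.const_mul ρ)
      _ =ᵐ[μ] fun a => ρ * ce mz μ (fun b => ω' b - ce mx μ ω' b) a := by
          have hfe : (fun a => ρ * (ω' a - ce mx μ ω' a))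
              = ρ • (fun b => ω' b - ce mx μ ω' b) := by
            funext a; simp
          have hsmul := condExp_smul (μ := μ) (m := mz) ρ
            (fun b => ω' b - ce mx μ ω' b)
          filter_upwards [hmom, hsmul] with a ha hb
          simp only [ce, hfe, Pi.add_apply, Pi.zero_apply, Pi.smul_apply,
            smul_eq_mul] at *
          rw [ha, hb]
          ring
  refine ⟨key, ?_⟩
  constructor
  · intro h
    have h2 : (fun a => ρ * ce mz μ (fun b => ω' b - ce mx μ ω' b) a) =ᵐ[μ] 0 :=
      key.symm.trans h
    filter_upwards [h2] with a ha
    have : ρ * ce mz μ (fun b => ω' b - ce mx μ ω' b) a = 0 := ha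
    exact (mul_eq_zero.mp this).resolve_left hρ
  · intro h
    refine key.trans ?_
    filter_upwards [h] with a ha
    simp [ha]
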